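/- PDA is incentive compatible: for every buyer i with true type θ_i, every report θ'_i with r'_i ⊆ r_i, every report profile θ'_{-i} of the others, and every order o ∈ O(V), u_i^o(θ_i, (θ_i, θ'_{-i})) ≥ u_i^o(θ_i, (θ'_i, θ'_{-i})); consequently truthful reporting maximizes i's expected utility over the uniformly random order. -/

import Mathlib

namespace DA

open scoped Classical

/-- A report profile for selling `k` homogeneous items: each agent reports a
valuation over quantities `0, …, k` and a set of neighbors. -/
structure Profile (V : Type*) (k : ℕ) where
  val : V → ℕ → ℝ
  nbr : V → Set V

/-- A valuation is valid if it is normalized (`v 0 = 0`) and has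
non-increasing marginals on `{0, …, k}`. -/
def ValidVal (k : ℕ) (v : ℕ → ℝ) : Prop :=
  v 0 = 0 ∧ ∀ q : ℕ, q + 2 ≤ k → v (q + 2) - v (q + 1) ≤ v (q + 1) - v q

variable {V : Type*}

/-- A profile is valid (w.r.t. seller `s`) if every buyer's valuation is valid. -/
def Profile.Valid {k : ℕ} (θ : Profile V k) (s : V) : Prop :=
  ∀ i : V, i ≠ s → ValidVal k (θ.val i)

/-- The reported (undirected) adjacency: `{i, j}` is an edge whenever
`j ∈ r'_i` (or symmetrically `i ∈ r'_j`). -/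
def Profile.adj {k : ℕ} (θ : Profile V k) (i j : V) : Prop :=
  j ∈ θ.nbr i ∨ i ∈ θ.nbr j

/-- The feasible set `F(θ', B)` of a coalition `B`: the buyers in `B` that are
connected to the seller `s` by a path of reported edges lying inside `B`
(empty if `s ∉ B`). -/
def Profile.feasible {k : ℕ} (θ : Profile V k) (s : V) (B : Set V) : Set V :=
  {i | i ≠ s ∧ i ∈ B ∧ s ∈ B ∧
    Relation.ReflTransGen (fun a b => θ.adj a b ∧ a ∈ B ∧ b ∈ B) s i}

/-- Updating agent `i`'s report in a profile. -/
def updateAgent [DecidableEq V] {k : ℕ} (θ : Profile V k) (i : V)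
    (v : ℕ → ℝ) (r : Set V) : Profile V k :=
  ⟨Function.update θ.val i v, Function.update θ.nbr i r⟩

/-- The profile `θ'_B` obtained by removing (setting to nil) the reports of
all agents outside the coalition `B`. -/
noncomputable def Profile.restrict {k : ℕ} (θ : Profile V k) (B : Set V) : Profile V k :=
  ⟨fun i q => if i ∈ B then θ.val i q else 0,
   fun i => if i ∈ B then θ.nbr i ∩ B else ∅⟩

section Homogeneous

variable [Fintype V] [DecidableEq V]

/-- Social welfare of an allocation `π` under reports `θ`. -/
def SW {k : ℕ} (θ : Profile V k) (s : V) (π : V → ℕ) : ℝ :=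
  ∑ i ∈ Finset.univ.erase s, θ.val i (π i)

/-- The allocations admissible for a coalition `B` with irrevocable prior
allocation `πhat`: at most `k` items in total are allocated (none to the
seller), only buyers in `F(θ, B)` receive items, and nobody receives fewer
items than in `πhat`. -/
def feasAllocs {k : ℕ} (θ : Profile V k) (s : V) (B : Set V) (πhat : V → ℕ) :
    Set (V → ℕ) :=
  {π | π s = 0 ∧ (∑ i ∈ Finset.univ.erase s, π i) ≤ k ∧
    (∀ i, i ∉ θ.feasible s B → π i = 0) ∧ ∀ j, j ≠ s → πhat j ≤ π j}

/-- `SW*(θ, B, πhat)`: the maximum social welfare over the admissible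
allocations for coalition `B` with prior allocation `πhat`. -/
noncomputable def SWstar {k : ℕ} (θ : Profile V k) (s : V) (B : Set V)
    (πhat : V → ℕ) : ℝ :=
  sSup (SW θ s '' feasAllocs θ s B πhat)

/-- A chosen allocation attaining `SW*(θ, B, πhat)`. -/
noncomputable def bestAlloc {k : ℕ} (θ : Profile V k) (s : V) (B : Set V)
    (πhat : V → ℕ) : V → ℕ :=
  Classical.epsilon fun π =>
    π ∈ feasAllocs θ s B πhat ∧ SW θ s π = SWstar θ s B πhat

/-- `o_{≺i}`: the set of agents strictly preceding `i` in the order `o`. -/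
def pred (o : V ≃ Fin (Fintype.card V)) (i : V) : Set V := {j | o j < o i}

/-- `o_{≼i} = o_{≺i} ∪ {i}`. -/
def predeq (o : V ≃ Fin (Fintype.card V)) (i : V) : Set V := {j | o j ≤ o i}

/-- The partial allocation produced by PDA after the first `t` agents of the
order `o` have been traversed: the seller is skipped, and each traversed buyer
`i` receives her share in a chosen allocation attaining
`SW*(θ, o_{≼i}, π^{o≺i})`, earlier allocations being irrevocable. -/
noncomputable def pdaStep {k : ℕ} (θ : Profile V k) (s : V)
    (o : V ≃ Fin (Fintype.card V)) : ℕ → V → ℕ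
  | 0 => fun _ => 0
  | t + 1 =>
    if h : t < Fintype.card V then
      let i := o.symm ⟨t, h⟩
      if i = s then pdaStep θ s o t
      else Function.update (pdaStep θ s o t) i
        (bestAlloc θ s (predeq o i) (pdaStep θ s o t) i)
    else pdaStep θ s o t

/-- `π^{o≺i}`: the allocation fixed by PDA right before agent `i` is traversed. -/
noncomputable def pdaPrior {k : ℕ} (θ : Profile V k) (s : V)
    (o : V ≃ Fin (Fintype.card V)) (i : V) : V → ℕ :=
  pdaStep θ s o (o i : ℕ)

/-- The final allocation `π^o` produced by PDA under the order `o`. -/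
noncomputable def pdaAlloc {k : ℕ} (θ : Profile V k) (s : V)
    (o : V ≃ Fin (Fintype.card V)) : V → ℕ :=
  pdaStep θ s o (Fintype.card V)

/-- The payment charged by PDA to agent `i` under the order `o`:
`p_i = SW*(θ, o_{≺i}, π^{o≺i}) − SW*(θ, o_{≼i}, π^{o≺i}) + v'_i(π_i)`, except
that agents traversed after all `k` items have been allocated pay `0`
(and the seller pays nothing). -/
noncomputable def pdaPay {k : ℕ} (θ : Profile V k) (s : V)
    (o : V ≃ Fin (Fintype.card V)) (i : V) : ℝ :=
  if i = s then 0
  else if (∑ j ∈ Finset.univ.erase s, pdaPrior θ s o i j) = k then 0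
  else SWstar θ s (pred o i) (pdaPrior θ s o i)
    - SWstar θ s (predeq o i) (pdaPrior θ s o i)
    + θ.val i (pdaAlloc θ s o i)

/-- `u_i^o`: the utility of buyer `i` with true valuation `v` under order `o`. -/
noncomputable def pdaUtil {k : ℕ} (v : ℕ → ℝ) (θ : Profile V k) (s : V)
    (o : V ≃ Fin (Fintype.card V)) (i : V) : ℝ :=
  v (pdaAlloc θ s o i) - pdaPay θ s o i

/-- `E_PDA(u_i)`: buyer `i`'s expected utility over the uniformly random order. -/
noncomputable def pdaExpUtil {k : ℕ} (v : ℕ → ℝ) (θ : Profile V k) (s : V)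
    (i : V) : ℝ :=
  (∑ o : V ≃ Fin (Fintype.card V), pdaUtil v θ s o i) /
    ((Fintype.card V).factorial : ℝ)

/-- `μ(θ)`: the fraction of orders for which PDA terminates with no item sold. -/
noncomputable def mu {k : ℕ} (θ : Profile V k) (s : V) : ℝ :=
  (Nat.card {o : V ≃ Fin (Fintype.card V) // ∀ j, pdaAlloc θ s o j = 0} : ℝ) /
    ((Fintype.card V).factorial : ℝ)

/-- The Shapley contribution `φ_i(θ)` of agent `i`. -/
noncomputable def shapley {k : ℕ} (θ : Profile V k) (s : V) (i : V) : ℝ :=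
  ∑ B ∈ (Finset.univ.erase i).powerset,
    ((B.card.factorial * (Fintype.card V - B.card - 1).factorial : ℝ) /
      ((Fintype.card V).factorial : ℝ)) *
    (SWstar θ s (↑(insert i B)) 0 - SWstar θ s (↑B) 0)

end Homogeneous

end DA

namespace DA

section AuxIC

variable {V : Type*} [Fintype V] [DecidableEq V] {k : ℕ}

lemma feasible_subset (θ : Profile V k) (s : V) (B : Set V) : θ.feasible s B ⊆ B :=
  fun _ h => h.2.1

lemma feasible_mono_B (θ : Profile V k) (s : V) {B₁ B₂ : Set V} (h : B₁ ⊆ B₂) :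
    θ.feasible s B₁ ⊆ θ.feasible s B₂ := by
  intro x hx
  refine ⟨hx.1, h hx.2.1, h hx.2.2.1, Relation.ReflTransGen.mono ?_ _ _ hx.2.2.2⟩
  intro a b hab
  exact ⟨hab.1, h hab.2.1, h hab.2.2⟩

lemma feasible_mono_adj {θ₁ θ₂ : Profile V k} (s : V) (B : Set V)
    (h : ∀ a b, a ∈ B → b ∈ B → θ₁.adj a b → θ₂.adj a b) :
    θ₁.feasible s B ⊆ θ₂.feasible s B := by
  intro x hx
  refine ⟨hx.1, hx.2.1, hx.2.2.1, Relation.ReflTransGen.mono ?_ _ _ hx.2.2.2⟩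
  intro a b hab
  exact ⟨h a b hab.2.1 hab.2.2 hab.1, hab.2.1, hab.2.2⟩

lemma feasible_congr {θ₁ θ₂ : Profile V k} (s : V) {B : Set V} (i : V) (hiB : i ∉ B)
    (hnbr : ∀ j, j ≠ i → θ₁.nbr j = θ₂.nbr j) :
    θ₁.feasible s B = θ₂.feasible s B := by
  have key : ∀ (θ₁ θ₂ : Profile V k), (∀ j, j ≠ i → θ₁.nbr j = θ₂.nbr j) →
      θ₁.feasible s B ⊆ θ₂.feasible s B := by
    intro θ₁ θ₂ h
    apply feasible_mono_adj
    intro a b ha hb hadj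
    have hai : a ≠ i := fun e => hiB (e ▸ ha)
    have hbi : b ≠ i := fun e => hiB (e ▸ hb)
    unfold Profile.adj at hadj ⊢
    rw [← h a hai, ← h b hbi]
    exact hadj
  exact le_antisymm (key _ _ hnbr) (key _ _ fun j hj => (hnbr j hj).symm)

lemma feasAllocs_eq_of_feasible_eq {θ₁ θ₂ : Profile V k} {s : V} {B : Set V} {πhat : V → ℕ}
    (h : θ₁.feasible s B = θ₂.feasible s B) :
    feasAllocs θ₁ s B πhat = feasAllocs θ₂ s B πhat := by
  unfold feasAllocs
  rw [h]

lemma feasAllocs_mono_feasible {θ₁ θ₂ : Profile V k} {s : V} {B : Set V} {πhat : V → ℕ}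
    (h : θ₂.feasible s B ⊆ θ₁.feasible s B) :
    feasAllocs θ₂ s B πhat ⊆ feasAllocs θ₁ s B πhat := by
  rintro π ⟨h1, h2, h3, h4⟩
  exact ⟨h1, h2, fun a ha => h3 a fun hf => ha (h hf), h4⟩

lemma feasAllocs_finite (θ : Profile V k) (s : V) (B : Set V) (πhat : V → ℕ) :
    (feasAllocs θ s B πhat).Finite := by
  apply Set.Finite.subset (Set.Finite.pi (t := fun _ : V => Set.Iic k)
    (fun _ => Set.finite_Iic k))
  rintro π ⟨h1, h2, _, _⟩
  intro a _
  rcases eq_or_ne a s with rfl | ha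
  · simp [h1]
  · have : π a ≤ ∑ j ∈ Finset.univ.erase s, π j :=
      Finset.single_le_sum (fun j _ => Nat.zero_le _)
        (Finset.mem_erase.mpr ⟨ha, Finset.mem_univ a⟩)
    exact Set.mem_Iic.mpr (this.trans h2)

lemma le_SWstar {θ : Profile V k} {s : V} {B : Set V} {πhat π : V → ℕ}
    (hπ : π ∈ feasAllocs θ s B πhat) :
    SW θ s π ≤ SWstar θ s B πhat :=
  le_csSup ((feasAllocs_finite θ s B πhat).image _).bddAbove ⟨π, hπ, rfl⟩

lemma bestAlloc_spec {θ : Profile V k} {s : V} {B : Set V} {πhat : V → ℕ}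
    (hne : (feasAllocs θ s B πhat).Nonempty) :
    bestAlloc θ s B πhat ∈ feasAllocs θ s B πhat ∧
      SW θ s (bestAlloc θ s B πhat) = SWstar θ s B πhat := by
  have hfin := (feasAllocs_finite θ s B πhat).image (SW θ s)
  have hmem := (hne.image (SW θ s)).csSup_mem hfin
  obtain ⟨π₀, h₀, hsw⟩ := hmem
  exact Classical.epsilon_spec
    (p := fun π => π ∈ feasAllocs θ s B πhat ∧ SW θ s π = SWstar θ s B πhat) ⟨π₀, h₀, hsw⟩

lemma SW_congr {θ₁ θ₂ : Profile V k} {s : V} (i : V)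
    (hval : ∀ j, j ≠ i → θ₁.val j = θ₂.val j) (h0 : θ₁.val i 0 = θ₂.val i 0)
    {π : V → ℕ} (hπi : π i = 0) : SW θ₁ s π = SW θ₂ s π := by
  unfold SW
  refine Finset.sum_congr rfl fun j _ => ?_
  rcases eq_or_ne j i with rfl | h
  · rw [hπi]; exact h0
  · rw [hval j h]

lemma SW_split {θ₁ θ₂ : Profile V k} {s : V} (i : V) (hi : i ≠ s)
    (hval : ∀ j, j ≠ i → θ₁.val j = θ₂.val j) (π : V → ℕ) :
    SW θ₁ s π = SW θ₂ s π - θ₂.val i (π i) + θ₁.val i (π i) := by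
  have hmem : i ∈ Finset.univ.erase s := Finset.mem_erase.mpr ⟨hi, Finset.mem_univ i⟩
  unfold SW
  rw [← Finset.sum_erase_add _ _ hmem, ← Finset.sum_erase_add _ (fun j => θ₂.val j (π j)) hmem]
  have he : ∑ j ∈ (Finset.univ.erase s).erase i, θ₁.val j (π j)
      = ∑ j ∈ (Finset.univ.erase s).erase i, θ₂.val j (π j) :=
    Finset.sum_congr rfl fun j hj => by rw [hval j (Finset.ne_of_mem_erase hj)]
  rw [he]; ring

lemma SWstar_congr {θ₁ θ₂ : Profile V k} {s : V} {B : Set V} {πhat : V → ℕ} (i : V)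
    (hiB : i ∉ B)
    (hval : ∀ j, j ≠ i → θ₁.val j = θ₂.val j) (h0 : θ₁.val i 0 = θ₂.val i 0)
    (hnbr : ∀ j, j ≠ i → θ₁.nbr j = θ₂.nbr j) :
    SWstar θ₁ s B πhat = SWstar θ₂ s B πhat := by
  have hF : feasAllocs θ₁ s B πhat = feasAllocs θ₂ s B πhat :=
    feasAllocs_eq_of_feasible_eq (feasible_congr s i hiB hnbr)
  unfold SWstar
  rw [← hF]
  congr 1
  apply Set.image_congr
  intro π hπ
  exact SW_congr i hval h0 (hπ.2.2.1 i fun hf => hiB (feasible_subset θ₁ s B hf))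

lemma bestAlloc_congr {θ₁ θ₂ : Profile V k} {s : V} {B : Set V} {πhat : V → ℕ} (i : V)
    (hiB : i ∉ B)
    (hval : ∀ j, j ≠ i → θ₁.val j = θ₂.val j) (h0 : θ₁.val i 0 = θ₂.val i 0)
    (hnbr : ∀ j, j ≠ i → θ₁.nbr j = θ₂.nbr j) :
    bestAlloc θ₁ s B πhat = bestAlloc θ₂ s B πhat := by
  have hF : feasAllocs θ₁ s B πhat = feasAllocs θ₂ s B πhat :=
    feasAllocs_eq_of_feasible_eq (feasible_congr s i hiB hnbr)
  have hS : SWstar θ₁ s B πhat = SWstar θ₂ s B πhat := SWstar_congr i hiB hval h0 hnbr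
  unfold bestAlloc
  congr 1
  funext π
  apply propext
  constructor
  · rintro ⟨h1, h2⟩
    refine ⟨hF ▸ h1, ?_⟩
    rw [← SW_congr i hval h0 (h1.2.2.1 i fun hf => hiB (feasible_subset θ₁ s B hf)), h2, ← hS]
  · rintro ⟨h1, h2⟩
    have h1' : π ∈ feasAllocs θ₁ s B πhat := hF ▸ h1
    refine ⟨h1', ?_⟩
    rw [SW_congr i hval h0 (h1'.2.2.1 i fun hf => hiB (feasible_subset θ₁ s B hf)), h2, hS]

lemma pdaStep_succ (θ : Profile V k) (s : V) (o : V ≃ Fin (Fintype.card V)) (t : ℕ) :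
    pdaStep θ s o (t + 1) =
      if h : t < Fintype.card V then
        let i := o.symm ⟨t, h⟩
        if i = s then pdaStep θ s o t
        else Function.update (pdaStep θ s o t) i
          (bestAlloc θ s (predeq o i) (pdaStep θ s o t) i)
      else pdaStep θ s o t := rfl

lemma pdaStep_congr {θ₁ θ₂ : Profile V k} (s : V) (o : V ≃ Fin (Fintype.card V)) (i : V)
    (hval : ∀ j, j ≠ i → θ₁.val j = θ₂.val j) (h0 : θ₁.val i 0 = θ₂.val i 0)
    (hnbr : ∀ j, j ≠ i → θ₁.nbr j = θ₂.nbr j) :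
    ∀ t, t ≤ (o i : ℕ) → pdaStep θ₁ s o t = pdaStep θ₂ s o t := by
  intro t
  induction t with
  | zero => intro _; rfl
  | succ t ih =>
    intro ht
    have hlt : t < (o i : ℕ) := ht
    have h : t < Fintype.card V := hlt.trans (o i).isLt
    have ihe := ih hlt.le
    rw [pdaStep_succ, pdaStep_succ, dif_pos h, dif_pos h]
    set j₀ := o.symm ⟨t, h⟩ with hj₀
    have hoj : (o j₀ : ℕ) = t := by rw [hj₀, Equiv.apply_symm_apply]
    have hji : i ∉ predeq o j₀ := by
      intro hmem
      have : (o i : ℕ) ≤ (o j₀ : ℕ) := hmem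
      omega
    rcases eq_or_ne j₀ s with he | he
    · simp only [if_pos he, ihe]
    · simp only [if_neg he]
      rw [ihe, bestAlloc_congr i hji hval h0 hnbr]

lemma pdaStep_frozen (θ : Profile V k) (s : V) (o : V ≃ Fin (Fintype.card V)) (i : V) :
    ∀ t, (o i : ℕ) < t → pdaStep θ s o t i = pdaStep θ s o ((o i : ℕ) + 1) i := by
  intro t
  induction t with
  | zero => omega
  | succ t ih =>
    intro ht
    rcases eq_or_lt_of_le (Nat.lt_succ_iff.mp ht) with he | hlt
    · rw [← he]
    · rcases lt_or_ge t (Fintype.card V) with h | h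
      · rw [pdaStep_succ, dif_pos h]
        set j₀ := o.symm ⟨t, h⟩ with hj₀
        have hoj : (o j₀ : ℕ) = t := by rw [hj₀, Equiv.apply_symm_apply]
        have hne : j₀ ≠ i := by intro he'; rw [he'] at hoj; omega
        rcases eq_or_ne j₀ s with he' | he'
        · simp only [if_pos he']; exact ih hlt
        · simp only [if_neg he']
          rw [Function.update_of_ne (Ne.symm hne)]
          exact ih hlt
      · rw [pdaStep_succ, dif_neg (not_lt.mpr h)]
        exact ih hlt

lemma pdaStep_invariant (θ : Profile V k) (s : V) (o : V ≃ Fin (Fintype.card V)) :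
    ∀ t, pdaStep θ s o t s = 0 ∧ (∑ j ∈ Finset.univ.erase s, pdaStep θ s o t j) ≤ k ∧
      ∀ j, pdaStep θ s o t j ≠ 0 → ((o j : ℕ) < t ∧ j ∈ θ.feasible s (predeq o j)) := by
  intro t
  induction t with
  | zero =>
    exact ⟨rfl, by simp [show (pdaStep θ s o 0 : V → ℕ) = fun _ => 0 from rfl],
      fun j hj => absurd rfl hj⟩
  | succ t ih =>
    obtain ⟨ihs, ihsum, ihsupp⟩ := ih
    rcases lt_or_ge t (Fintype.card V) with h | h
    · rw [pdaStep_succ, dif_pos h]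
      set j₀ := o.symm ⟨t, h⟩ with hj₀
      have hoj : (o j₀ : ℕ) = t := by rw [hj₀, Equiv.apply_symm_apply]
      rcases eq_or_ne j₀ s with he | he
      · simp only [if_pos he]
        exact ⟨ihs, ihsum, fun j hj => ⟨(ihsupp j hj).1.trans (Nat.lt_succ_self t),
          (ihsupp j hj).2⟩⟩
      · simp only [if_neg he]
        have hne : (feasAllocs θ s (predeq o j₀) (pdaStep θ s o t)).Nonempty := by
          refine ⟨pdaStep θ s o t, ihs, ihsum, ?_, fun _ _ => le_rfl⟩
          intro a ha
          by_contra hc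
          obtain ⟨hlt, hfeas⟩ := ihsupp a hc
          have hle : o a ≤ o j₀ := by rw [Fin.le_def]; omega
          exact ha (feasible_mono_B θ s (fun x hx => le_trans hx hle) hfeas)
        obtain ⟨hmem, _⟩ := bestAlloc_spec hne
        obtain ⟨hs0, hsum, hsupp, hge⟩ := hmem
        set π := bestAlloc θ s (predeq o j₀) (pdaStep θ s o t) with hπ
        refine ⟨?_, ?_, ?_⟩
        · rw [Function.update_of_ne (Ne.symm he)]; exact ihs
        · refine le_trans (Finset.sum_le_sum ?_) hsum
          intro a ha
          rcases eq_or_ne a j₀ with rfl | ha'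
          · rw [Function.update_self]
          · rw [Function.update_of_ne ha']
            exact hge a (Finset.ne_of_mem_erase ha)
        · intro j hj
          rcases eq_or_ne j j₀ with rfl | hj'
          · rw [Function.update_self] at hj
            refine ⟨by omega, ?_⟩
            by_contra hc
            exact hj (hsupp _ hc)
          · rw [Function.update_of_ne hj'] at hj
            exact ⟨(ihsupp j hj).1.trans (Nat.lt_succ_self t), (ihsupp j hj).2⟩
    · rw [pdaStep_succ, dif_neg (not_lt.mpr h)]
      exact ⟨ihs, ihsum, fun j hj => ⟨(ihsupp j hj).1.trans (Nat.lt_succ_self t),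
        (ihsupp j hj).2⟩⟩

lemma pdaPrior_self_eq_zero (θ : Profile V k) (s : V) (o : V ≃ Fin (Fintype.card V))
    (i : V) : pdaPrior θ s o i i = 0 := by
  by_contra hc
  have := ((pdaStep_invariant θ s o (o i : ℕ)).2.2 i hc).1
  omega

lemma prior_mem (θ : Profile V k) (s : V) (o : V ≃ Fin (Fintype.card V)) (i : V) :
    pdaPrior θ s o i ∈ feasAllocs θ s (predeq o i) (pdaPrior θ s o i) := by
  obtain ⟨hs0, hsum, hsupp⟩ := pdaStep_invariant θ s o (o i : ℕ)
  refine ⟨hs0, hsum, ?_, fun _ _ => le_rfl⟩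
  intro a ha
  by_contra hc
  obtain ⟨hlt, hfeas⟩ := hsupp a hc
  have hle : o a ≤ o i := by rw [Fin.le_def]; omega
  exact ha (feasible_mono_B θ s (fun x hx => le_trans hx hle) hfeas)

lemma pdaAlloc_eq (θ : Profile V k) (s : V) (o : V ≃ Fin (Fintype.card V)) (i : V)
    (hi : i ≠ s) :
    pdaAlloc θ s o i = bestAlloc θ s (predeq o i) (pdaPrior θ s o i) i := by
  have hcard : (o i : ℕ) < Fintype.card V := (o i).isLt
  have h1 : pdaAlloc θ s o i = pdaStep θ s o ((o i : ℕ) + 1) i := by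
    unfold pdaAlloc
    rcases eq_or_lt_of_le (Nat.succ_le_of_lt hcard) with he | hlt
    · exact congrFun (congrArg (pdaStep θ s o) (he.symm : Fintype.card V = (o i : ℕ) + 1)) i
    · exact pdaStep_frozen θ s o i _ hcard
  rw [h1, pdaStep_succ, dif_pos hcard]
  have hsymm : o.symm ⟨(o i : ℕ), hcard⟩ = i := by
    rw [show (⟨(o i : ℕ), hcard⟩ : Fin (Fintype.card V)) = o i from Fin.eta _ _,
      Equiv.symm_apply_apply]
  simp only [hsymm, if_neg hi, Function.update_self]
  rfl

lemma forced_alloc {θ : Profile V k} {s : V} {B : Set V} {πhat π : V → ℕ}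
    (hsum : (∑ j ∈ Finset.univ.erase s, πhat j) = k)
    (hπ : π ∈ feasAllocs θ s B πhat) : ∀ j, j ≠ s → π j = πhat j := by
  have h1 : ∀ j ∈ Finset.univ.erase s, πhat j ≤ π j :=
    fun j hj => hπ.2.2.2 j (Finset.ne_of_mem_erase hj)
  have h2 : (∑ j ∈ Finset.univ.erase s, π j) ≤ ∑ j ∈ Finset.univ.erase s, πhat j :=
    hsum ▸ hπ.2.1
  have h3 := (Finset.sum_eq_sum_iff_of_le h1).mp
    (le_antisymm (Finset.sum_le_sum h1) h2)
  intro j hj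
  exact (h3 j (Finset.mem_erase.mpr ⟨hj, Finset.mem_univ j⟩)).symm

end AuxIC

end DA


/-- PDA is incentive compatible: for every buyer i with true type
θ_i = (v, r), every report θ'_i = (v', r') with r' ⊆ r, every report profile of
the others (recorded in θ), and every order o,
u_i^o(θ_i, (θ_i, θ'_{-i})) ≥ u_i^o(θ_i, (θ'_i, θ'_{-i})); consequently truthful
reporting maximizes i's expected utility over the uniformly random order. -/
theorem pda_IC {V : Type*} [Fintype V] [DecidableEq V]
    {k : ℕ} (hk : 1 ≤ k) (θ : DA.Profile V k) (s : V) (hθ : θ.Valid s)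
    (i : V) (hi : i ≠ s)
    (v v' : ℕ → ℝ) (r r' : Set V) (hr : r' ⊆ r)
    (hv : DA.ValidVal k v) (hv' : DA.ValidVal k v') :
    (∀ o : V ≃ Fin (Fintype.card V),
        DA.pdaUtil v (DA.updateAgent θ i v r) s o i
          ≥ DA.pdaUtil v (DA.updateAgent θ i v' r') s o i)
    ∧ DA.pdaExpUtil v (DA.updateAgent θ i v r) s i
        ≥ DA.pdaExpUtil v (DA.updateAgent θ i v' r') s i := by
  classical
  set θ₁ := DA.updateAgent θ i v r with hθ₁def
  set θ₂ := DA.updateAgent θ i v' r' with hθ₂def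
  have hval : ∀ j, j ≠ i → θ₁.val j = θ₂.val j := by
    intro j hj
    show Function.update θ.val i v j = Function.update θ.val i v' j
    rw [Function.update_of_ne hj, Function.update_of_ne hj]
  have hval₁i : θ₁.val i = v := by
    show Function.update θ.val i v i = v
    rw [Function.update_self]
  have hval₂i : θ₂.val i = v' := by
    show Function.update θ.val i v' i = v'
    rw [Function.update_self]
  have h0 : θ₁.val i 0 = θ₂.val i 0 := by rw [hval₁i, hval₂i, hv.1, hv'.1]
  have hnbr : ∀ j, j ≠ i → θ₁.nbr j = θ₂.nbr j := by
    intro j hj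
    show Function.update θ.nbr i r j = Function.update θ.nbr i r' j
    rw [Function.update_of_ne hj, Function.update_of_ne hj]
  have hnbr_sub : ∀ a, θ₂.nbr a ⊆ θ₁.nbr a := by
    intro a
    rcases eq_or_ne a i with rfl | ha
    · show Function.update θ.nbr a r' a ⊆ Function.update θ.nbr a r a
      rw [Function.update_self, Function.update_self]
      exact hr
    · show Function.update θ.nbr i r' a ⊆ Function.update θ.nbr i r a
      rw [Function.update_of_ne ha, Function.update_of_ne ha]
  have hadj : ∀ a b, θ₂.adj a b → θ₁.adj a b := fun a b hab =>
    hab.imp (fun h => hnbr_sub a h) (fun h => hnbr_sub b h)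
  have key : ∀ o : V ≃ Fin (Fintype.card V),
      DA.pdaUtil v θ₂ s o i ≤ DA.pdaUtil v θ₁ s o i := by
    intro o
    have hprior : DA.pdaPrior θ₂ s o i = DA.pdaPrior θ₁ s o i :=
      (DA.pdaStep_congr s o i hval h0 hnbr (o i : ℕ) le_rfl).symm
    have hne₁ : (DA.feasAllocs θ₁ s (DA.predeq o i) (DA.pdaPrior θ₁ s o i)).Nonempty :=
      ⟨_, DA.prior_mem θ₁ s o i⟩
    have hmem₂' := DA.prior_mem θ₂ s o i
    rw [hprior] at hmem₂'
    have hne₂ : (DA.feasAllocs θ₂ s (DA.predeq o i) (DA.pdaPrior θ₁ s o i)).Nonempty :=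
      ⟨_, hmem₂'⟩
    obtain ⟨hb₁mem, hb₁sw⟩ := DA.bestAlloc_spec hne₁
    obtain ⟨hb₂mem, hb₂sw⟩ := DA.bestAlloc_spec hne₂
    have ha₁ : DA.pdaAlloc θ₁ s o i
        = DA.bestAlloc θ₁ s (DA.predeq o i) (DA.pdaPrior θ₁ s o i) i :=
      DA.pdaAlloc_eq θ₁ s o i hi
    have ha₂ : DA.pdaAlloc θ₂ s o i
        = DA.bestAlloc θ₂ s (DA.predeq o i) (DA.pdaPrior θ₁ s o i) i := by
      rw [DA.pdaAlloc_eq θ₂ s o i hi, hprior]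
    unfold DA.pdaUtil DA.pdaPay
    rw [if_neg hi, if_neg hi, hprior]
    by_cases hC : (∑ j ∈ Finset.univ.erase s, DA.pdaPrior θ₁ s o i j) = k
    · rw [if_pos hC, if_pos hC]
      have hz₁ : DA.pdaAlloc θ₁ s o i = 0 := by
        rw [ha₁, DA.forced_alloc hC hb₁mem i hi]
        exact DA.pdaPrior_self_eq_zero θ₁ s o i
      have hz₂ : DA.pdaAlloc θ₂ s o i = 0 := by
        rw [ha₂, DA.forced_alloc hC hb₂mem i hi]
        exact DA.pdaPrior_self_eq_zero θ₁ s o i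
      rw [hz₁, hz₂]
    · rw [if_neg hC, if_neg hC]
      have hipred : i ∉ DA.pred o i := lt_irrefl (o i)
      have hW0 : DA.SWstar θ₂ s (DA.pred o i) (DA.pdaPrior θ₁ s o i)
          = DA.SWstar θ₁ s (DA.pred o i) (DA.pdaPrior θ₁ s o i) :=
        (DA.SWstar_congr i hipred hval h0 hnbr).symm
      have hsub : DA.bestAlloc θ₂ s (DA.predeq o i) (DA.pdaPrior θ₁ s o i)
          ∈ DA.feasAllocs θ₁ s (DA.predeq o i) (DA.pdaPrior θ₁ s o i) :=
        DA.feasAllocs_mono_feasible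
          (DA.feasible_mono_adj s _ (fun a b _ _ h => hadj a b h)) hb₂mem
      have hle : DA.SW θ₁ s (DA.bestAlloc θ₂ s (DA.predeq o i) (DA.pdaPrior θ₁ s o i))
          ≤ DA.SWstar θ₁ s (DA.predeq o i) (DA.pdaPrior θ₁ s o i) := DA.le_SWstar hsub
      have hsplit := DA.SW_split (θ₁ := θ₁) (θ₂ := θ₂) (s := s) i hi hval
        (DA.bestAlloc θ₂ s (DA.predeq o i) (DA.pdaPrior θ₁ s o i))
      rw [hval₁i, hval₂i] at hsplit
      rw [ha₁, ha₂, hval₁i, hval₂i, hW0, ← hb₂sw]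
      linarith
  refine ⟨fun o => key o, ?_⟩
  unfold DA.pdaExpUtil
  exact div_le_div_of_nonneg_right (Finset.sum_le_sum fun o _ => key o)
    (Nat.cast_nonneg _)
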